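/- For each m ∈ {0,…,4} and each pair 0 ≤ r < s ≤ 4, the substitution automorphism σ_{T_m} satisfies σ_{T_m}(φ_{rs}) = −φ_{rs} if m ∈ {r,s}, and σ_{T_m}(φ_{rs}) = φ_{rs} if m ∉ {r,s}. -/
import Mathlib


open Matrix Complex MvPolynomial

noncomputable def T : Fin 5 → Matrix (Fin 4) (Fin 4) ℂ :=
  ![!![1,0,0,0; 0,-1,0,0; 0,0,1,0; 0,0,0,-1],
    !![0,I,0,0; -I,0,0,0; 0,0,0,-I; 0,0,I,0],
    !![0,1,0,0; 1,0,0,0; 0,0,0,1; 0,0,1,0],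
    !![0,0,0,1; 0,0,-1,0; 0,-1,0,0; 1,0,0,0],
    !![0,0,0,I; 0,0,-I,0; 0,I,0,0; -I,0,0,0]]

/-- The substitution automorphism `σ_A` of `ℂ[x₁,…,x₄]` with `σ_A(x_j) = Σ_k A j k • x_k`.
Here `x_j` is `X (j-1)` for `j = 1,…,4`. -/
noncomputable def subst (A : Matrix (Fin 4) (Fin 4) ℂ) :
    MvPolynomial (Fin 4) ℂ →ₐ[ℂ] MvPolynomial (Fin 4) ℂ :=
  MvPolynomial.aeval (fun j => ∑ k, MvPolynomial.C (A j k) * MvPolynomial.X k)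

/-- The quadratic forms `φ_{rs}`, indexed by natural numbers `0 ≤ r < s ≤ 4`
(`x_j` is `X (j-1)`); the value is `0` for index pairs not of this shape. -/
noncomputable def phiN : ℕ → ℕ → MvPolynomial (Fin 4) ℂ
  | 0, 1 => -2 * (X 0 * X 3 + X 1 * X 2)
  | 0, 2 => C (2 * I) * (-(X 0 * X 3) + X 1 * X 2)
  | 0, 3 => C (2 * I) * (X 0 * X 1 + X 2 * X 3)
  | 0, 4 => 2 * (-(X 0 * X 1) + X 2 * X 3)
  | 1, 2 => 2 * (X 0 * X 2 - X 1 * X 3)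
  | 1, 3 => -X 0 ^ 2 - X 1 ^ 2 + X 2 ^ 2 + X 3 ^ 2
  | 1, 4 => C I * (X 0 ^ 2 + X 1 ^ 2 + X 2 ^ 2 + X 3 ^ 2)
  | 2, 3 => C I * (-X 0 ^ 2 + X 1 ^ 2 - X 2 ^ 2 + X 3 ^ 2)
  | 2, 4 => X 0 ^ 2 - X 1 ^ 2 - X 2 ^ 2 + X 3 ^ 2
  | 3, 4 => 2 * (X 0 * X 2 + X 1 * X 3)
  | _, _ => 0

noncomputable def phi (r s : Fin 5) : MvPolynomial (Fin 4) ℂ := phiN r.val s.val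

private lemma CI2 : (MvPolynomial.C Complex.I : MvPolynomial (Fin 4) ℂ) ^ 2 = -1 := by
  rw [← map_pow, Complex.I_sq, map_neg, _root_.map_one]

private lemma CI3 : (MvPolynomial.C Complex.I : MvPolynomial (Fin 4) ℂ) ^ 3 = -MvPolynomial.C Complex.I := by
  rw [← map_pow, (by rw [pow_succ, Complex.I_sq]; ring : Complex.I ^ 3 = -Complex.I), map_neg]

private lemma CI4 : (MvPolynomial.C Complex.I : MvPolynomial (Fin 4) ℂ) ^ 4 = 1 := by
  rw [← map_pow, Complex.I_pow_four, _root_.map_one]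

private lemma substC (A : Matrix (Fin 4) (Fin 4) ℂ) (c : ℂ) : subst A (MvPolynomial.C c) = MvPolynomial.C c := by
  simp [subst]

set_option maxHeartbeats 1000000 in
private lemma substX (m : Fin 5) (j : Fin 4) :
    subst (T m) (X j) =
    ![![X 0, -X 1, X 2, -X 3],
      ![C I * X 1, C (-I) * X 0, C (-I) * X 3, C I * X 2],
      ![X 1, X 0, X 3, X 2],
      ![X 3, -X 2, -X 1, X 0],
      ![C I * X 3, C (-I) * X 2, C I * X 1, C (-I) * X 0]] m j := by
  fin_cases m <;> fin_cases j <;>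
    simp [subst, T, Fin.sum_univ_four, Matrix.vecHead, Matrix.vecTail]

set_option maxHeartbeats 4000000 in
set_option maxRecDepth 10000 in
/-- `σ_{T m}(φ_{rs}) = -φ_{rs}` if `m ∈ {r,s}` and `σ_{T m}(φ_{rs}) = φ_{rs}` if
`m ∉ {r,s}`. -/
theorem stmt7 (m r s : Fin 5) (h : r < s) :
    ((m = r ∨ m = s) → subst (T m) (phi r s) = -phi r s) ∧
    ((m ≠ r ∧ m ≠ s) → subst (T m) (phi r s) = phi r s) := by
  fin_cases m <;> fin_cases r <;> fin_cases s <;>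
    first
    | exact absurd h (by decide)
    | (constructor <;> intro hh <;>
        first
        | exact absurd hh (by decide)
        | (simp only [phi, phiN, map_add, _root_.map_mul, map_neg, map_sub, map_pow,
            map_ofNat, substC, Fin.isValue,
            (show ((⟨0, by omega⟩ : Fin 5)) = 0 from rfl), (show ((⟨1, by omega⟩ : Fin 5)) = 1 from rfl),
            (show ((⟨2, by omega⟩ : Fin 5)) = 2 from rfl), (show ((⟨3, by omega⟩ : Fin 5)) = 3 from rfl),
            (show ((⟨4, by omega⟩ : Fin 5)) = 4 from rfl), substX, Matrix.cons_val_zero, Matrix.cons_val_one,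
            Matrix.head_cons, Matrix.cons_val_two, Matrix.cons_val_three, Matrix.tail_cons,
            Matrix.cons_val_four, Matrix.cons_val', Matrix.empty_val', Matrix.cons_val_fin_one,
            Matrix.head_fin_const]
           ring_nf
           try simp only [CI2, CI3, CI4, neg_mul, mul_neg, neg_neg, mul_one, one_mul, map_neg]
           try ring))
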